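/- Let m ≥ 3 be an integer and let f : ℕ → ℕ satisfy f(0) = 1 and 1 ≤ f(j+1) ≤ 2·f(j) for all j. Then there exists a star tree A of degree m with basepoint v₀ ∈ V₀(A) such that for every j ≥ 0 the number of vertices of V₀(A) at level j is exactly f(j), and such that at least one vertex of V₁(A) of degree 1 is adjacent to v₀. -/

import Mathlib

open SimpleGraph MulAction
open scoped ENNReal

universe u

variable {V : Type u}

/-- The automorphism group of a simple graph, as a subgroup of the permutation group
of its vertex set. -/
def SimpleGraph.autGroup (G : SimpleGraph V) : Subgroup (Equiv.Perm V) where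
  carrier := {f | ∀ u v : V, G.Adj (f u) (f v) ↔ G.Adj u v}
  one_mem' := by intro u v; simp
  mul_mem' := by
    intro a b ha hb u v
    simp only [Set.mem_setOf_eq, Equiv.Perm.mul_apply] at *
    rw [ha, hb]
  inv_mem' := by
    intro a ha u v
    simpa using (ha (a⁻¹ u) (a⁻¹ v)).symm

/-- A subgroup of the permutation group of the vertices is discrete if all vertex
stabilizers are finite. -/
def IsDiscreteSubgroup (Γ : Subgroup (Equiv.Perm V)) : Prop :=
  ∀ v : V, Finite (stabilizer Γ v)

/-- The `S`-covolume of a subgroup `Γ` of the permutation group of the vertices: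
the sum of `1 / |Γ_v|` over the `Γ`-orbits meeting `S` (for `Γ`-invariant `S`, the
orbits contained in `S`), where `v` is a representative of the orbit. -/
noncomputable def covolume (Γ : Subgroup (Equiv.Perm V)) (S : Set V) : ℝ≥0∞ :=
  ∑' O : {O : Quotient (orbitRel Γ V) // Quotient.out O ∈ S},
    ((Nat.card (stabilizer Γ (Quotient.out (O : Quotient (orbitRel Γ V))))) : ℝ≥0∞)⁻¹

/-- A lattice: a discrete subgroup with finite covolume with respect to the set of
all vertices. -/
def IsGraphLattice (Γ : Subgroup (Equiv.Perm V)) : Prop :=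
  IsDiscreteSubgroup Γ ∧ covolume Γ Set.univ ≠ ⊤

/-- A nonuniform lattice: a lattice with infinitely many orbits of vertices. -/
def IsNonuniformLattice (Γ : Subgroup (Equiv.Perm V)) : Prop :=
  IsGraphLattice Γ ∧ Infinite (Quotient (orbitRel Γ V))

/-- `f ⪯ g` : there are `a, b` with `f k ≤ a * g (k + b)` for all `k`. -/
def GrowthLE (f g : ℕ → ℕ) : Prop :=
  ∃ a b : ℕ, ∀ k : ℕ, f k ≤ a * g (k + b)

/-- Equivalence of growth types. -/
def GrowthEquiv (f g : ℕ → ℕ) : Prop :=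
  GrowthLE f g ∧ GrowthLE g f

/-- The number of `Γ`-orbits of vertices meeting the ball of radius `k` about `x₀`. -/
noncomputable def quotientGrowth (G : SimpleGraph V) (Γ : Subgroup (Equiv.Perm V))
    (x₀ : V) (k : ℕ) : ℕ :=
  Nat.card {O : Quotient (orbitRel Γ V) //
    ∃ v : V, Quotient.mk (orbitRel Γ V) v = O ∧ G.dist v x₀ ≤ k}

/-- The maximal order of a `Γ`-stabilizer of a vertex in the ball of radius `k`
about `x₀`. -/
noncomputable def stabilizerGrowth (G : SimpleGraph V) (Γ : Subgroup (Equiv.Perm V))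
    (x₀ : V) (k : ℕ) : ℕ :=
  sSup {c : ℕ | ∃ v : V, G.dist v x₀ ≤ k ∧ c = Nat.card (stabilizer Γ v)}

/-- The `p`-order of a (finite) group order `k` : the largest power of `p` dividing `k`. -/
def pOrder (p k : ℕ) : ℕ := p ^ (k.factorization p)

/-- The maximal `p`-order of a `Γ`-stabilizer of a vertex in the ball of radius `k`
about `x₀`. -/
noncomputable def pStabilizerGrowth (G : SimpleGraph V) (Γ : Subgroup (Equiv.Perm V))
    (p : ℕ) (x₀ : V) (k : ℕ) : ℕ :=
  sSup {c : ℕ | ∃ v : V, G.dist v x₀ ≤ k ∧ c = pOrder p (Nat.card (stabilizer Γ v))}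

/-- `Γ` and `Γ'` are commensurable in (a subgroup) `A` of the permutation group:
some `A`-conjugate of `Γ` intersects `Γ'` in finite index in both. -/
def CommensurableIn {GG : Type u} [Group GG] (A Γ Γ' : Subgroup GG) : Prop :=
  ∃ g ∈ A, Subgroup.Commensurable (Subgroup.map (MulAut.conj g).toMonoidHom Γ) Γ'

/-- An `(m,n)`-biregular tree with parts `V₀`, `V₁`. -/
structure IsBiregularTree (G : SimpleGraph V) (V₀ V₁ : Set V) (m n : ℕ) : Prop where
  connected : G.Connected
  acyclic : G.IsAcyclic
  disjoint : Disjoint V₀ V₁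
  union : V₀ ∪ V₁ = Set.univ
  adj_parts : ∀ ⦃u v : V⦄, G.Adj u v → (u ∈ V₀ ∧ v ∈ V₁) ∨ (u ∈ V₁ ∧ v ∈ V₀)
  degree₀ : ∀ v ∈ V₀, (G.neighborSet v).Finite ∧ (G.neighborSet v).ncard = m
  degree₁ : ∀ v ∈ V₁, (G.neighborSet v).Finite ∧ (G.neighborSet v).ncard = n

/-- A star tree of degree `m` with parts `V₀`, `V₁`. -/
structure IsStarTree (A : SimpleGraph V) (V₀ V₁ : Set V) (m : ℕ) : Prop where
  connected : A.Connected
  acyclic : A.IsAcyclic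
  disjoint : Disjoint V₀ V₁
  union : V₀ ∪ V₁ = Set.univ
  adj_parts : ∀ ⦃u v : V⦄, A.Adj u v → (u ∈ V₀ ∧ v ∈ V₁) ∨ (u ∈ V₁ ∧ v ∈ V₀)
  degree₀ : ∀ v ∈ V₀, (A.neighborSet v).Finite ∧ (A.neighborSet v).ncard = m
  degree₁ : ∀ v ∈ V₁, (A.neighborSet v).Finite ∧
    ((A.neighborSet v).ncard = 1 ∨ (A.neighborSet v).ncard = 2)

/-- The quotient graph `Γ\X`: vertices are `Γ`-orbits; two distinct orbits are
adjacent iff some vertex of one is adjacent to some vertex of the other. -/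
def quotientGraph (G : SimpleGraph V) (Γ : Subgroup (Equiv.Perm V)) :
    SimpleGraph (Quotient (orbitRel Γ V)) where
  Adj O O' := O ≠ O' ∧ ∃ u v : V, Quotient.mk (orbitRel Γ V) u = O ∧
    Quotient.mk (orbitRel Γ V) v = O' ∧ G.Adj u v
  symm := ⟨by
    rintro O O' ⟨hne, u, v, hu, hv, huv⟩
    exact ⟨hne.symm, v, u, hv, hu, huv.symm⟩⟩
  loopless := ⟨fun O h => h.1 rfl⟩

/-- An acceptable quotient growth function. -/
structure AcceptableGrowth (f : ℕ → ℕ) : Prop where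
  base : f 0 = 1
  one_le : ∀ j : ℕ, 1 ≤ f (j + 1)
  le_two_mul : ∀ j : ℕ, f (j + 1) ≤ 2 * f j
  summable : Summable fun j : ℕ => (f j : ℝ) / 2 ^ j

/-- An `n`-admissible sequence `s`, indexed by `k ≥ 1`. -/
def NAdmissible (n : ℕ) (s : ℕ → ℕ) : Prop :=
  ∀ k : ℕ, 1 ≤ k → s k ∣ n ∧ 2 < s k ∧ s k ≤ n

/-- The associated function `h j = (s 1 - 1) * ⋯ * (s j - 1)`, with `h 0 = 1`. -/
def admProd (s : ℕ → ℕ) (j : ℕ) : ℕ := ∏ i ∈ Finset.Icc 1 j, (s i - 1)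

abbrev stW (f : ℕ → ℕ) (m : ℕ) : Type :=
  (Σ j : ℕ, Fin (f j)) ⊕ (Σ j : ℕ, Fin (f j) × Fin (if j = 0 then m else m - 1))

def stR (f : ℕ → ℕ) (m : ℕ) : stW f m → stW f m → Prop
  | Sum.inl a, Sum.inr s =>
      (a.1 = s.1 ∧ (a.2 : ℕ) = (s.2.1 : ℕ)) ∨
      (a.1 = s.1 + 1 ∧ (a.2 : ℕ) = 2 * (s.2.1 : ℕ) + (s.2.2 : ℕ) ∧ (s.2.2 : ℕ) < 2)
  | _, _ => False

def stG (f : ℕ → ℕ) (m : ℕ) : SimpleGraph (stW f m) where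
  Adj u v := stR f m u v ∨ stR f m v u
  symm := ⟨fun u v h => h.symm⟩
  loopless := ⟨fun u h => by
    rcases h with h | h <;> rcases u with a | s <;> exact h.elim⟩

def stH (f : ℕ → ℕ) (m : ℕ) : stW f m → ℕ
  | Sum.inl a => 2 * a.1
  | Sum.inr s => 2 * s.1 + 1

lemma stAdj_h {f : ℕ → ℕ} {m : ℕ} {u v : stW f m} (h : (stG f m).Adj u v) :
    stH f m u + 1 = stH f m v ∨ stH f m v + 1 = stH f m u := by
  rcases h with h | h <;> rcases u with a | s <;> rcases v with a' | s' <;>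
    first
      | exact h.elim
      | · rcases h with ⟨h1, -⟩ | ⟨h1, -, -⟩ <;> simp only [stH] <;> omega

lemma stH_walk {f : ℕ → ℕ} {m : ℕ} {u v : stW f m} (p : (stG f m).Walk u v) :
    stH f m u ≤ stH f m v + p.length := by
  induction p with
  | nil => simp
  | cons h q ih =>
    rcases stAdj_h h with h' | h' <;> simp only [Walk.length_cons] <;> omega

def stRoot (f : ℕ → ℕ) (m : ℕ) (h0 : 0 < f 0) : stW f m := Sum.inl ⟨0, ⟨0, h0⟩⟩

lemma stH_eq_zero {f : ℕ → ℕ} {m : ℕ} (hf0 : f 0 = 1) {v : stW f m}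
    (hv : stH f m v = 0) : v = stRoot f m (by omega) := by
  rcases v with ⟨j, x⟩ | s
  · simp only [stH] at hv
    have hj : j = 0 := by omega
    subst hj
    have hx : (x : ℕ) = 0 := by have := x.isLt; omega
    have hx0 : x = ⟨0, by omega⟩ := Fin.ext (by simp [hx])
    rw [stRoot, hx0]
  · simp only [stH] at hv; omega

lemma stDown_exists {f : ℕ → ℕ} {m : ℕ} (hm : 3 ≤ m) (hf2 : ∀ j, f (j + 1) ≤ 2 * f j)
    {v : stW f m} (hv : stH f m v ≠ 0) :
    ∃ u, (stG f m).Adj v u ∧ stH f m u + 1 = stH f m v := by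
  rcases v with ⟨j, x⟩ | ⟨j, i, t⟩
  · simp only [stH] at hv ⊢
    obtain ⟨j', rfl⟩ : ∃ j', j = j' + 1 := ⟨j - 1, by omega⟩
    have hx2 : (x : ℕ) / 2 < f j' := by have := x.isLt; have := hf2 j'; omega
    have hxm : (x : ℕ) % 2 < if j' = 0 then m else m - 1 := by
      have : (x : ℕ) % 2 < 2 := Nat.mod_lt _ (by omega)
      split <;> omega
    refine ⟨Sum.inr ⟨j', ⟨⟨(x : ℕ) / 2, hx2⟩, ⟨(x : ℕ) % 2, hxm⟩⟩⟩, Or.inl ?_, ?_⟩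
    · refine Or.inr ⟨rfl, ?_, ?_⟩ <;> dsimp only <;> omega
    · simp only [stH]; omega
  · exact ⟨Sum.inl ⟨j, i⟩, Or.inr (Or.inl ⟨rfl, rfl⟩), by simp only [stH]⟩

lemma stDown_unique {f : ℕ → ℕ} {m : ℕ} {v u u' : stW f m}
    (h1 : (stG f m).Adj v u) (h2 : (stG f m).Adj v u')
    (e1 : stH f m u + 1 = stH f m v) (e2 : stH f m u' + 1 = stH f m v) : u = u' := by
  have key : ∀ w : stW f m, (stG f m).Adj v w → stH f m w + 1 = stH f m v →
      (∃ (j : ℕ) (x : Fin (f (j + 1))) (i : Fin (f j))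
        (t : Fin (if j = 0 then m else m - 1)),
        v = Sum.inl ⟨j + 1, x⟩ ∧ w = Sum.inr ⟨j, i, t⟩ ∧
        (i : ℕ) = (x : ℕ) / 2 ∧ (t : ℕ) = (x : ℕ) % 2) ∨
      (∃ (j : ℕ) (i : Fin (f j)) (t : Fin (if j = 0 then m else m - 1)) (x : Fin (f j)),
        v = Sum.inr ⟨j, i, t⟩ ∧ w = Sum.inl ⟨j, x⟩ ∧ (x : ℕ) = (i : ℕ)) := by
    intro w hadj he
    rcases v with ⟨j, x⟩ | ⟨j, i, t⟩ <;> rcases w with ⟨j₁, x₁⟩ | ⟨j₁, i₁, t₁⟩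
    · exact absurd hadj (by rintro (h | h) <;> exact h)
    · -- v node, w slot
      left
      have hR : stR f m (Sum.inl ⟨j, x⟩) (Sum.inr ⟨j₁, i₁, t₁⟩) := by
        rcases hadj with h | h
        · exact h
        · exact h.elim
      simp only [stH] at he
      have hj : j = j₁ + 1 := by omega
      subst hj
      rcases hR with ⟨h1', h2'⟩ | ⟨h1', h2', h3'⟩
      · exact absurd h1' (by dsimp only at *; omega)
      · dsimp only at h2' h3'
        exact ⟨j₁, x, i₁, t₁, rfl, rfl, by omega, by omega⟩
    · -- v slot, w node
      right
      have hR : stR f m (Sum.inl ⟨j₁, x₁⟩) (Sum.inr ⟨j, i, t⟩) := by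
        rcases hadj with h | h
        · exact h.elim
        · exact h
      simp only [stH] at he
      have hj : j₁ = j := by omega
      subst hj
      rcases hR with ⟨h1', h2'⟩ | ⟨h1', h2', h3'⟩
      · dsimp only at h2'
        exact ⟨j₁, i, t, x₁, rfl, rfl, h2'⟩
      · exact absurd h1' (by dsimp only at *; omega)
    · exact absurd hadj (by rintro (h | h) <;> exact h)
  rcases key u h1 e1 with ⟨j, x, i, t, hv, hu, hi, ht⟩ | ⟨j, i, t, x, hv, hu, hx⟩ <;>
    rcases key u' h2 e2 with ⟨j', x', i', t', hv', hu', hi', ht'⟩ | ⟨j', i', t', x', hv', hu', hx'⟩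
  · subst hu hu'
    rw [hv] at hv'
    injection Sum.inl.inj hv' with hfst hsnd
    have hj : j = j' := by omega
    subst hj
    have hxe : x = x' := eq_of_heq hsnd
    subst hxe
    have hii : i = i' := Fin.ext (by omega)
    have htt : t = t' := Fin.ext (by omega)
    rw [hii, htt]
  · rw [hv] at hv'; exact absurd hv' (by simp)
  · rw [hv] at hv'; exact absurd hv' (by simp)
  · subst hu hu'
    rw [hv] at hv'
    injection Sum.inr.inj hv' with hfst hsnd
    have hj : j = j' := hfst
    subst hj
    have hpair : (i, t) = (i', t') := eq_of_heq hsnd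
    injection hpair with hii htt
    subst hii
    have hxx : x = x' := Fin.ext (by omega)
    rw [hxx]

lemma stWalk_exists {f : ℕ → ℕ} {m : ℕ} (hm : 3 ≤ m) (hf0 : f 0 = 1) (h0 : 0 < f 0)
    (hf2 : ∀ j, f (j + 1) ≤ 2 * f j) (v : stW f m) :
    ∃ p : (stG f m).Walk v (stRoot f m h0), p.length = stH f m v := by
  suffices H : ∀ n (v : stW f m), stH f m v = n →
      ∃ p : (stG f m).Walk v (stRoot f m h0), p.length = stH f m v from
    H _ v rfl
  intro n
  induction n using Nat.strong_induction_on with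
  | _ n ih =>
    intro v hv
    rcases Nat.eq_zero_or_pos n with rfl | hn
    · rw [stH_eq_zero hf0 hv]
      exact ⟨Walk.nil, by simp [hv, stRoot, stH]⟩
    · obtain ⟨u, hadj, he⟩ := stDown_exists hm hf2 (v := v) (by omega)
      obtain ⟨q, hq⟩ := ih (stH f m u) (by omega) u rfl
      exact ⟨Walk.cons hadj q, by simp [hq]; omega⟩

lemma stDist {f : ℕ → ℕ} {m : ℕ} (hm : 3 ≤ m) (hf0 : f 0 = 1) (h0 : 0 < f 0)
    (hf2 : ∀ j, f (j + 1) ≤ 2 * f j) (v : stW f m) :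
    (stG f m).dist v (stRoot f m h0) = stH f m v := by
  obtain ⟨p, hp⟩ := stWalk_exists hm hf0 h0 hf2 v
  have hle : (stG f m).dist v (stRoot f m h0) ≤ stH f m v := hp ▸ dist_le p
  refine le_antisymm hle ?_
  by_cases hd0 : (stG f m).dist v (stRoot f m h0) = 0
  · have hr : (stG f m).Reachable v (stRoot f m h0) := ⟨p⟩
    have hv : v = stRoot f m h0 := (hr.dist_eq_zero_iff).mp hd0
    subst hv
    rw [SimpleGraph.dist_self]
    simp [stRoot, stH]
  · obtain ⟨q, hq⟩ := exists_walk_of_dist_ne_zero hd0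
    have := stH_walk q
    have hroot : stH f m (stRoot f m h0) = 0 := by simp [stRoot, stH]
    omega

lemma stConnected {f : ℕ → ℕ} {m : ℕ} (hm : 3 ≤ m) (hf0 : f 0 = 1)
    (hf2 : ∀ j, f (j + 1) ≤ 2 * f j) : (stG f m).Connected := by
  have h0 : 0 < f 0 := by omega
  have : Nonempty (stW f m) := ⟨stRoot f m h0⟩
  refine ⟨fun u v => ?_⟩
  obtain ⟨p, -⟩ := stWalk_exists hm hf0 h0 hf2 u
  obtain ⟨q, -⟩ := stWalk_exists hm hf0 h0 hf2 v
  exact Reachable.trans ⟨p⟩ (Reachable.symm ⟨q⟩)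

lemma stAcyclic {f : ℕ → ℕ} {m : ℕ} : (stG f m).IsAcyclic := by
  classical
  intro v c hc
  -- pick a vertex of maximal height on the cycle
  obtain ⟨x, hx⟩ : ∃ x, x ∈ c.support.argmax (stH f m) := by
    rcases ho : c.support.argmax (stH f m) with - | x
    · exact absurd (List.argmax_eq_none.mp ho) c.support_ne_nil
    · exact ⟨x, rfl⟩
  have hx_mem : x ∈ c.support := List.argmax_mem hx
  have hx_max : ∀ a ∈ c.support, stH f m a ≤ stH f m x :=
    fun a ha => List.le_of_mem_argmax ha hx
  have hc' : (c.rotate x hx_mem).IsCycle := hc.rotate hx_mem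
  have hsup : ∀ y ∈ (c.rotate x hx_mem).support, stH f m y ≤ stH f m x := by
    intro y hy
    rw [Walk.support_eq_cons] at hy
    rcases hy with _ | hy
    · exact le_refl _
    · rename_i hy
      exact hx_max y (List.mem_of_mem_tail
        ((Walk.support_rotate c x hx_mem).mem_iff.mp hy))
  have hlen : 3 ≤ (c.rotate x hx_mem).length := hc'.three_le_length
  cases hrot : c.rotate x hx_mem with
  | nil => rw [hrot] at hlen; simp at hlen
  | @cons _ y _ hadj q =>
    rw [hrot] at hc' hsup hlen
    rw [Walk.cons_isCycle_iff] at hc'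
    obtain ⟨hq_path, hne⟩ := hc'
    -- y is a down-neighbor of x
    have hy_mem : y ∈ (Walk.cons hadj q).support := by
      simp [Walk.support_cons, q.start_mem_support]
    have hy : stH f m y + 1 = stH f m x := by
      rcases stAdj_h hadj with h' | h'
      · have := hsup y hy_mem; omega
      · exact h'
    -- the penultimate vertex z is also a down-neighbor of x
    have hq_nil : ¬ q.reverse.Nil := by
      rw [Walk.nil_iff_length_eq, Walk.length_reverse]
      simp only [Walk.length_cons] at hlen
      omega
    set z := q.reverse.getVert 1 with hz_def
    have hadj_z : (stG f m).Adj x z := q.reverse.adj_snd hq_nil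
    have hz_memq : z ∈ q.support := by
      have : z ∈ q.reverse.support :=
        Walk.mem_support_iff_exists_getVert.mpr ⟨1, rfl, by
          rw [Walk.length_reverse]
          simp only [Walk.length_cons] at hlen
          omega⟩
      rw [Walk.support_reverse, List.mem_reverse] at this
      exact this
    have hz_mem : z ∈ (Walk.cons hadj q).support := by
      simp [Walk.support_cons]
      right
      exact hz_memq
    have hz : stH f m z + 1 = stH f m x := by
      rcases stAdj_h hadj_z with h' | h'
      · have := hsup z hz_mem; omega
      · exact h'
    -- hence y = z
    have hyz : y = z := stDown_unique hadj hadj_z hy hz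
    -- but the edge s(x,z) lies in q, contradicting that s(x,y) does not
    have hmem : s(x, z) ∈ q.edges := by
      have h1 : s(x, z) ∈ q.reverse.edges := by
        rw [← Walk.cons_tail_eq q.reverse hq_nil, Walk.edges_cons]
        exact List.mem_cons_self
      rw [Walk.edges_reverse, List.mem_reverse] at h1
      exact h1
    rw [← hyz] at hmem
    exact hne hmem

lemma stSlot_eq {f : ℕ → ℕ} {m : ℕ} {j j' : ℕ} {i : Fin (f j)} {i' : Fin (f j')}
    {t : Fin (if j = 0 then m else m - 1)} {t' : Fin (if j' = 0 then m else m - 1)}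
    (hj : j = j') (hi : (i : ℕ) = (i' : ℕ)) (ht : (t : ℕ) = (t' : ℕ)) :
    (Sum.inr ⟨j, (i, t)⟩ : stW f m) = Sum.inr ⟨j', (i', t')⟩ := by
  subst hj
  have h1 : i = i' := Fin.ext hi
  subst h1
  have h2 : t = t' := Fin.ext ht
  subst h2
  rfl

lemma st_ncard_range {α : Type*} {n : ℕ} {g : Fin n → α} (hg : Function.Injective g) :
    (Set.range g).ncard = n := by
  rw [← Set.image_univ, Set.ncard_image_of_injective _ hg, Set.ncard_univ,
    Nat.card_eq_fintype_card, Fintype.card_fin]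

lemma stNbhd_node_zero {f : ℕ → ℕ} {m : ℕ} (x : Fin (f 0)) :
    (stG f m).neighborSet (Sum.inl ⟨0, x⟩) =
      Set.range (fun t : Fin (if (0:ℕ) = 0 then m else m - 1) =>
        (Sum.inr ⟨0, x, t⟩ : stW f m)) := by
  ext w
  simp only [mem_neighborSet, Set.mem_range]
  constructor
  · rintro (h | h)
    · rcases w with a | ⟨j, i, t⟩
      · exact h.elim
      · rcases h with ⟨h1, h2⟩ | ⟨h1, -, -⟩
        · dsimp only at h1 h2
          subst h1
          have : i = x := Fin.ext h2.symm
          subst this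
          exact ⟨t, rfl⟩
        · dsimp only at h1; exact absurd h1 (by omega)
    · rcases w with a | s
      · exact h.elim
      · exact h.elim
  · rintro ⟨t, rfl⟩
    exact Or.inl (Or.inl ⟨rfl, rfl⟩)

lemma stNbhd_node_succ {f : ℕ → ℕ} {m : ℕ} (hm : 3 ≤ m) (hf2 : ∀ j, f (j + 1) ≤ 2 * f j)
    (j : ℕ) (x : Fin (f (j + 1))) :
    (stG f m).neighborSet (Sum.inl ⟨j + 1, x⟩) =
      Set.range (fun t : Fin (if j + 1 = 0 then m else m - 1) =>
        (Sum.inr ⟨j + 1, x, t⟩ : stW f m)) ∪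
      {Sum.inr ⟨j, ⟨(x : ℕ) / 2, by have := x.isLt; have := hf2 j; omega⟩,
        ⟨(x : ℕ) % 2, by have : (x:ℕ) % 2 < 2 := Nat.mod_lt _ (by omega); split <;> omega⟩⟩} := by
  ext w
  simp only [mem_neighborSet, Set.mem_union, Set.mem_range, Set.mem_singleton_iff]
  constructor
  · rintro (h | h)
    · rcases w with a | ⟨j₁, i, t⟩
      · exact h.elim
      · rcases h with ⟨h1, h2⟩ | ⟨h1, h2, h3⟩
        · dsimp only at h1 h2
          left
          subst h1
          have : i = x := Fin.ext h2.symm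
          subst this
          exact ⟨t, rfl⟩
        · dsimp only at h1 h2 h3
          right
          have hj : j₁ = j := by omega
          exact stSlot_eq hj (show (i : ℕ) = (x : ℕ) / 2 by omega)
            (show (t : ℕ) = (x : ℕ) % 2 by omega)
    · rcases w with a | s
      · exact h.elim
      · exact h.elim
  · rintro (⟨t, rfl⟩ | rfl)
    · exact Or.inl (Or.inl ⟨rfl, rfl⟩)
    · exact Or.inl (Or.inr ⟨rfl, show (x : ℕ) = 2 * ((x : ℕ) / 2) + (x : ℕ) % 2 by omega,
        show (x : ℕ) % 2 < 2 by omega⟩)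

lemma stNode_eq {f : ℕ → ℕ} {m : ℕ} {j j' : ℕ} {x : Fin (f j)} {x' : Fin (f j')}
    (hj : j = j') (hx : (x : ℕ) = (x' : ℕ)) :
    (Sum.inl ⟨j, x⟩ : stW f m) = Sum.inl ⟨j', x'⟩ := by
  subst hj
  have h1 : x = x' := Fin.ext hx
  subst h1
  rfl

lemma stNbhd_slot_leaf {f : ℕ → ℕ} {m : ℕ} (j : ℕ) (i : Fin (f j))
    (t : Fin (if j = 0 then m else m - 1))
    (hcond : ¬((t : ℕ) < 2 ∧ 2 * (i : ℕ) + (t : ℕ) < f (j + 1))) :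
    (stG f m).neighborSet (Sum.inr ⟨j, i, t⟩) = {Sum.inl ⟨j, i⟩} := by
  ext w
  simp only [mem_neighborSet, Set.mem_singleton_iff]
  constructor
  · rintro (h | h)
    · rcases w with a | s <;> exact h.elim
    · rcases w with ⟨j₁, x⟩ | s
      · rcases h with ⟨h1, h2⟩ | ⟨h1, h2, h3⟩
        · dsimp only at h1 h2
          exact stNode_eq h1 (by omega)
        · dsimp only at h1 h2 h3
          exact absurd (by constructor <;> [exact h3; · rw [← h2, ← h1]; exact x.isLt]) hcond
      · exact h.elim
  · rintro rfl
    exact Or.inr (Or.inl ⟨rfl, rfl⟩)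

lemma stNbhd_slot_conn {f : ℕ → ℕ} {m : ℕ} (j : ℕ) (i : Fin (f j))
    (t : Fin (if j = 0 then m else m - 1))
    (h2i : (t : ℕ) < 2) (hlt : 2 * (i : ℕ) + (t : ℕ) < f (j + 1)) :
    (stG f m).neighborSet (Sum.inr ⟨j, i, t⟩) =
      {Sum.inl ⟨j, i⟩, Sum.inl ⟨j + 1, ⟨2 * (i : ℕ) + (t : ℕ), hlt⟩⟩} := by
  ext w
  simp only [mem_neighborSet, Set.mem_insert_iff, Set.mem_singleton_iff]
  constructor
  · rintro (h | h)
    · rcases w with a | s <;> exact h.elim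
    · rcases w with ⟨j₁, x⟩ | s
      · rcases h with ⟨h1, h2⟩ | ⟨h1, h2, h3⟩
        · dsimp only at h1 h2
          exact Or.inl (stNode_eq h1 (by omega))
        · dsimp only at h1 h2 h3
          exact Or.inr (stNode_eq h1 (show (x : ℕ) = 2 * (i : ℕ) + (t : ℕ) by omega))
      · exact h.elim
  · rintro (rfl | rfl)
    · exact Or.inr (Or.inl ⟨rfl, rfl⟩)
    · exact Or.inr (Or.inr ⟨rfl, rfl, h2i⟩)

lemma st_slot_inj {f : ℕ → ℕ} {m : ℕ} (j : ℕ) (i : Fin (f j)) :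
    Function.Injective (fun t : Fin (if j = 0 then m else m - 1) =>
      (Sum.inr ⟨j, i, t⟩ : stW f m)) := by
  intro t t' h
  injection Sum.inr.inj h with h1 h2
  injection h2

lemma stDegree_node {f : ℕ → ℕ} {m : ℕ} (hm : 3 ≤ m) (hf2 : ∀ j, f (j + 1) ≤ 2 * f j)
    (j : ℕ) (x : Fin (f j)) :
    ((stG f m).neighborSet (Sum.inl ⟨j, x⟩)).Finite ∧
      ((stG f m).neighborSet (Sum.inl ⟨j, x⟩)).ncard = m := by
  cases j with
  | zero =>
    rw [stNbhd_node_zero x]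
    refine ⟨Set.finite_range _, ?_⟩
    rw [st_ncard_range (st_slot_inj 0 x)]
    rfl
  | succ j =>
    have hm2 : (x : ℕ) % 2 < 2 := Nat.mod_lt _ (by omega)
    have hd1 : (x : ℕ) / 2 < f j := by have := x.isLt; have := hf2 j; omega
    have hd2 : (x : ℕ) % 2 < if j = 0 then m else m - 1 := by split <;> omega
    rw [stNbhd_node_succ hm hf2 j x]
    have hdisj : Disjoint
        (Set.range (fun t : Fin (if j + 1 = 0 then m else m - 1) =>
          (Sum.inr ⟨j + 1, x, t⟩ : stW f m)))
        {(Sum.inr ⟨j, ⟨(x : ℕ) / 2, hd1⟩, ⟨(x : ℕ) % 2, hd2⟩⟩ : stW f m)} := by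
      rw [Set.disjoint_singleton_right]
      rintro ⟨t, ht⟩
      injection Sum.inr.inj ht with h1 h2
      omega
    refine ⟨(Set.finite_range _).union (Set.finite_singleton _), ?_⟩
    rw [Set.ncard_union_eq hdisj (Set.finite_range _) (Set.finite_singleton _),
      st_ncard_range (st_slot_inj (j + 1) x), Set.ncard_singleton]
    have hne : j + 1 ≠ 0 := by omega
    rw [if_neg hne]
    omega
lemma stDegree_slot {f : ℕ → ℕ} {m : ℕ} (j : ℕ) (i : Fin (f j))
    (t : Fin (if j = 0 then m else m - 1)) :
    ((stG f m).neighborSet (Sum.inr ⟨j, i, t⟩)).Finite ∧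
      (((stG f m).neighborSet (Sum.inr ⟨j, i, t⟩)).ncard = 1 ∨
       ((stG f m).neighborSet (Sum.inr ⟨j, i, t⟩)).ncard = 2) := by
  by_cases hcond : (t : ℕ) < 2 ∧ 2 * (i : ℕ) + (t : ℕ) < f (j + 1)
  · rw [stNbhd_slot_conn j i t hcond.1 hcond.2]
    refine ⟨(Set.finite_singleton _).insert _, Or.inr ?_⟩
    rw [Set.ncard_pair]
    intro h
    injection Sum.inl.inj h with h1 h2
    omega
  · rw [stNbhd_slot_leaf j i t hcond]
    exact ⟨Set.finite_singleton _, Or.inl (Set.ncard_singleton _)⟩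

lemma st_node_inj {f : ℕ → ℕ} {m : ℕ} (j : ℕ) :
    Function.Injective (fun x : Fin (f j) => (Sum.inl ⟨j, x⟩ : stW f m)) := by
  intro x x' h
  injection Sum.inl.inj h

lemma stLevel {f : ℕ → ℕ} {m : ℕ} (hm : 3 ≤ m) (hf0 : f 0 = 1) (h0 : 0 < f 0)
    (hf2 : ∀ j, f (j + 1) ≤ 2 * f j) (j : ℕ) :
    {v : stW f m | v ∈ Set.range (Sum.inl : (Σ j : ℕ, Fin (f j)) → stW f m) ∧
      (stG f m).dist v (stRoot f m h0) = 2 * j} =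
    Set.range (fun x : Fin (f j) => (Sum.inl ⟨j, x⟩ : stW f m)) := by
  ext w
  simp only [Set.mem_setOf_eq, Set.mem_range]
  constructor
  · rintro ⟨⟨⟨a, x⟩, rfl⟩, hd⟩
    rw [stDist hm hf0 h0 hf2] at hd
    simp only [stH] at hd
    have ha : a = j := by omega
    subst ha
    exact ⟨x, rfl⟩
  · rintro ⟨x, rfl⟩
    refine ⟨⟨⟨j, x⟩, rfl⟩, ?_⟩
    rw [stDist hm hf0 h0 hf2]
    rfl

/-- For `m ≥ 3` and any `f : ℕ → ℕ` with `f 0 = 1` and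
`1 ≤ f (j+1) ≤ 2 f j`, there is a star tree of degree `m` with basepoint `v₀`
having exactly `f j` vertices of `V₀` at level `j` for every `j`, and having a
degree-one `V₁`-vertex adjacent to the basepoint. -/
theorem statement11 {m : ℕ} (hm : 3 ≤ m) {f : ℕ → ℕ} (hf0 : f 0 = 1)
    (hf : ∀ j : ℕ, 1 ≤ f (j + 1) ∧ f (j + 1) ≤ 2 * f j) :
    ∃ (W : Type) (A : SimpleGraph W) (W₀ W₁ : Set W) (v₀ : W),
      IsStarTree A W₀ W₁ m ∧ v₀ ∈ W₀ ∧
      (∀ j : ℕ, {v : W | v ∈ W₀ ∧ A.dist v v₀ = 2 * j}.ncard = f j) ∧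
      (∃ c₀ ∈ W₁, (A.neighborSet c₀).ncard = 1 ∧ A.Adj v₀ c₀) := by
  have hf2 : ∀ j, f (j + 1) ≤ 2 * f j := fun j => (hf j).2
  have h0 : 0 < f 0 := by omega
  refine ⟨stW f m, stG f m, Set.range Sum.inl, Set.range Sum.inr, stRoot f m h0,
    ⟨stConnected hm hf0 hf2, stAcyclic, ?_, ?_, ?_, ?_, ?_⟩, ⟨⟨0, ⟨0, h0⟩⟩, rfl⟩, ?_, ?_⟩
  · rw [Set.disjoint_left]
    rintro w ⟨a, rfl⟩ ⟨b, hb⟩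
    cases hb
  · ext w
    rcases w with a | s <;> simp
  · intro u v h
    rcases h with h | h
    · rcases u with a | s <;> rcases v with a' | s'
      · exact h.elim
      · exact Or.inl ⟨⟨a, rfl⟩, ⟨s', rfl⟩⟩
      · exact h.elim
      · exact h.elim
    · rcases u with a | s <;> rcases v with a' | s'
      · exact h.elim
      · exact h.elim
      · exact Or.inr ⟨⟨s, rfl⟩, ⟨a', rfl⟩⟩
      · exact h.elim
  · rintro v ⟨⟨j, x⟩, rfl⟩
    exact stDegree_node hm hf2 j x
  · rintro v ⟨⟨j, i, t⟩, rfl⟩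
    exact stDegree_slot j i t
  · intro j
    rw [stLevel hm hf0 h0 hf2 j, st_ncard_range (st_node_inj j)]
  · have h2m : 2 < if (0 : ℕ) = 0 then m else m - 1 := by
      rw [if_pos rfl]; omega
    refine ⟨Sum.inr ⟨0, ⟨0, h0⟩, ⟨2, h2m⟩⟩, ⟨⟨0, ⟨0, h0⟩, ⟨2, h2m⟩⟩, rfl⟩, ?_, ?_⟩
    · rw [stNbhd_slot_leaf 0 ⟨0, h0⟩ ⟨2, h2m⟩
        (show ¬((2 : ℕ) < 2 ∧ 2 * 0 + 2 < f (0 + 1)) by omega)]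
      exact Set.ncard_singleton _
    · exact Or.inl (Or.inl ⟨rfl, rfl⟩)
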